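/- Let I be an ideal of the polynomial ring R = k[x_1,…,x_n] over a field k that has projective dimension one and is minimally generated by q+1 square-free monomials. Then q+1 ≤ n. -/

import Mathlib

open Finset MvPolynomial

noncomputable section

/-- The square-free monomial with support `S` in `R = k[x_1,…,x_n]`. -/
def mon (k : Type) [Field k] (n : ℕ) (S : Finset (Fin n)) : MvPolynomial (Fin n) k :=
  ∏ x ∈ S, X x

/-- The ideal `I = (m_0, …, m_q)`. -/
def IspI (k : Type) [Field k] (n q : ℕ) (S : ℕ → Finset (Fin n)) :
    Ideal (MvPolynomial (Fin n) k) :=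
  Ideal.span {f | ∃ i ≤ q, f = mon k n (S i)}

/-- The map `π : R^{q+1} → R` sending the `i`-th basis vector to `m_i`. -/
def piMap (k : Type) [Field k] (n q : ℕ) (S : ℕ → Finset (Fin n)) :
    (Fin (q + 1) → MvPolynomial (Fin n) k) →ₗ[MvPolynomial (Fin n) k]
      MvPolynomial (Fin n) k :=
  ∑ i : Fin (q + 1), (LinearMap.proj i).smulRight (mon k n (S i.1))

/-- `pd_R(I) = 1` for the ideal minimally generated by `m_0,…,m_q`:
the kernel of the minimal presentation `π` is free (a second syzygy module is zero),
and is nonzero. -/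
def PdOne (k : Type) [Field k] (n q : ℕ) (S : ℕ → Finset (Fin n)) : Prop :=
  (∃ (t : ℕ) (d : (Fin t → MvPolynomial (Fin n) k)
      →ₗ[MvPolynomial (Fin n) k] (Fin (q + 1) → MvPolynomial (Fin n) k)),
    Function.Injective d ∧ LinearMap.range d = LinearMap.ker (piMap k n q S)) ∧
  LinearMap.ker (piMap k n q S) ≠ ⊥

/-- Minimal generation: no `m_i` divides `m_j` for `i ≠ j` (equivalently no containment
of supports). -/
def MinGen (n q : ℕ) (S : ℕ → Finset (Fin n)) : Prop :=
  ∀ i ≤ q, ∀ j ≤ q, i ≠ j → ¬ S i ⊆ S j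

namespace S8

section Basic
variable {k : Type} [Field k] {n : ℕ}







/-- exponent finsupp of a squarefree monomial -/
def dS (A : Finset (Fin n)) : Fin n →₀ ℕ := ∑ v ∈ A, Finsupp.single v 1

lemma dS_apply (A : Finset (Fin n)) (w : Fin n) : dS A w = if w ∈ A then 1 else 0 := by
  classical
  simp [dS, Finsupp.finset_sum_apply, Finsupp.single_apply, Finset.sum_ite_eq' A w (fun _ => 1)]

lemma mon_eq_monomial (A : Finset (Fin n)) : mon k n A = monomial (dS A) 1 := by
  classical
  induction A using Finset.induction_on with
  | empty => simp [mon, dS]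
  | insert a s h ih =>
    rw [mon, Finset.prod_insert h, ← mon]
    rw [ih, X, monomial_mul, one_mul]; simp [dS, Finset.sum_insert h]

lemma mon_ne_zero (A : Finset (Fin n)) : (mon k n A : MvPolynomial (Fin n) k) ≠ 0 := by
  rw [mon_eq_monomial]
  simp [monomial_eq_zero]

lemma dS_sdiff_add (A B : Finset (Fin n)) : dS (B \ A) + dS A = dS (A ∪ B) := by
  classical
  ext w
  simp only [Finsupp.add_apply, dS_apply, Finset.mem_sdiff, Finset.mem_union]
  by_cases hA : w ∈ A <;> by_cases hB : w ∈ B <;> simp [hA, hB]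

lemma mon_sdiff_mul (A B : Finset (Fin n)) :
    (mon k n (B \ A)) * mon k n A = mon k n (A ∪ B) := by
  rw [mon_eq_monomial, mon_eq_monomial, mon_eq_monomial, monomial_mul, one_mul, dS_sdiff_add]




end Basic

variable (k : Type) [Field k] (n q : ℕ) (S : ℕ → Finset (Fin n))

def sig (p : Fin (q+1) × Fin (q+1)) : Fin (q+1) → MvPolynomial (Fin n) k :=
  Pi.single p.1 (mon k n (S p.2.1 \ S p.1.1)) - Pi.single p.2 (mon k n (S p.1.1 \ S p.2.1))

def psi (C : Finset (Fin (q+1))) :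
    (Fin (q+1) → MvPolynomial (Fin n) k) →ₗ[MvPolynomial (Fin n) k] MvPolynomial (Fin n) k :=
  ∑ l ∈ C, (LinearMap.proj l).smulRight (mon k n (S l.1))

variable {k n q S}

lemma psi_apply (C : Finset (Fin (q+1))) (v : Fin (q+1) → MvPolynomial (Fin n) k) :
    psi k n q S C v = ∑ l ∈ C, v l * mon k n (S l.1) := by
  simp [psi, LinearMap.sum_apply, smul_eq_mul]

lemma piMap_apply (v : Fin (q+1) → MvPolynomial (Fin n) k) :
    piMap k n q S v = ∑ l : Fin (q+1), v l * mon k n (S l.1) := by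
  simp [piMap, LinearMap.sum_apply, smul_eq_mul]

lemma psi_single (C : Finset (Fin (q+1))) (a : Fin (q+1)) (x : MvPolynomial (Fin n) k) :
    psi k n q S C (Pi.single a x) = if a ∈ C then x * mon k n (S a.1) else 0 := by
  classical
  rw [psi_apply]
  rw [Finset.sum_congr rfl (fun l _ => by rw [Pi.single_apply])]
  simp only [ite_mul, zero_mul]
  exact Finset.sum_ite_eq' C a _

lemma psi_sig (C : Finset (Fin (q+1))) (p : Fin (q+1) × Fin (q+1)) :
    psi k n q S C (sig k n q S p) =
      ((if p.1 ∈ C then 1 else 0) - (if p.2 ∈ C then 1 else 0)) *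
        mon k n (S p.1.1 ∪ S p.2.1) := by
  classical
  rw [sig, map_sub, psi_single, psi_single]
  rw [mon_sdiff_mul, mon_sdiff_mul]
  rw [Finset.union_comm (S p.2.1) (S p.1.1)]
  split_ifs <;> ring

lemma sig_mem_ker (p : Fin (q+1) × Fin (q+1)) :
    sig k n q S p ∈ LinearMap.ker (piMap k n q S) := by
  classical
  have : piMap k n q S = psi k n q S Finset.univ := by
    rw [piMap, psi]
  rw [LinearMap.mem_ker, this, psi_sig]
  simp

/-- substitution x_v ↦ 0 -/
def ev (v : Fin n) : MvPolynomial (Fin n) k →ₐ[k] MvPolynomial (Fin n) k :=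
  aeval (fun w => if w = v then 0 else X w)

lemma ev_mon_of_mem {v : Fin n} {A : Finset (Fin n)} (h : v ∈ A) :
    ev (k := k) v (mon k n A) = 0 := by
  classical
  rw [mon, map_prod]
  exact Finset.prod_eq_zero h (by simp [ev])

lemma ev_mon_of_not_mem {v : Fin n} {A : Finset (Fin n)} (h : v ∉ A) :
    ev (k := k) v (mon k n A) = mon k n A := by
  classical
  rw [mon, map_prod]
  exact Finset.prod_congr rfl (fun w hw => by
    have : w ≠ v := fun e => h (e ▸ hw)
    simp [ev, this])

lemma constantCoeff_ev (f : MvPolynomial (Fin n) k) (v : Fin n) :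
    constantCoeff (ev (k := k) v f) = constantCoeff f := by
  have : (constantCoeff.comp (ev (k := k) v).toRingHom : MvPolynomial (Fin n) k →+* k)
      = constantCoeff := by
    apply MvPolynomial.ringHom_ext
    · intro a; simp [ev]
    · intro w; by_cases hw : w = v <;> simp [ev, hw]
  calc constantCoeff (ev (k := k) v f)
      = (constantCoeff.comp (ev (k := k) v).toRingHom) f := rfl
    _ = constantCoeff f := by rw [this]

lemma key_div {f c : MvPolynomial (Fin n) k} {A B : Finset (Fin n)}
    (hf : constantCoeff f = 1) (h : f * mon k n A = c * mon k n B) : B ⊆ A := by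
  classical
  intro v hv
  by_contra hvA
  have he := congrArg (ev (k := k) v) h
  rw [map_mul, map_mul, ev_mon_of_mem hv, mul_zero, ev_mon_of_not_mem hvA] at he
  have h1 : ev (k := k) v f ≠ 0 := by
    intro h0
    rw [← constantCoeff_ev f v, h0] at hf
    simp at hf
  exact (mul_ne_zero h1 (mon_ne_zero A)) he


section GenC
variable {k : Type} [Field k] {n q : ℕ} {S : ℕ → Finset (Fin n)}

/-- exponent of generator i -/
abbrev deg (S : ℕ → Finset (Fin n)) (i : Fin (q+1)) : Fin n →₀ ℕ := dS (S i.1)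

lemma coeff_piMap (v : Fin (q+1) → MvPolynomial (Fin n) k) (a : Fin n →₀ ℕ) :
    coeff a (piMap k n q S v)
      = ∑ l : Fin (q+1), (if deg S l ≤ a then coeff (a - deg S l) (v l) else 0) := by
  classical
  rw [piMap_apply, MvPolynomial.coeff_sum]
  refine Finset.sum_congr rfl (fun l _ => ?_)
  rw [mon_eq_monomial, coeff_mul_monomial']
  split_ifs <;> simp

/-- the piece of a vector in multidegree `a` -/
def wcomp (S : ℕ → Finset (Fin n)) (a : Fin n →₀ ℕ) (c : Fin (q+1) → k) :
    Fin (q+1) → MvPolynomial (Fin n) k :=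
  fun i => if deg S i ≤ a then monomial (a - deg S i) (c i) else 0

lemma sum_single_apply {β : Type*} [AddCommMonoid β] (I : Finset (Fin (q+1)))
    (g : Fin (q+1) → β) (j : Fin (q+1)) :
    (∑ i ∈ I, Pi.single (M := fun _ => β) i (g i)) j = if j ∈ I then g j else 0 := by
  classical
  rw [Finset.sum_apply]
  rw [Finset.sum_congr rfl (fun l _ => by rw [Pi.single_apply])]
  exact Finset.sum_ite_eq I j g

lemma exponent_identity {A B : Finset (Fin n)} {a : Fin n →₀ ℕ}
    (h1 : dS A ≤ a) (h2 : dS B ≤ a) :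
    (a - dS (A ∪ B)) + dS (B \ A) = a - dS A := by
  classical
  ext w
  have h1w := Finsupp.le_def.mp h1 w
  have h2w := Finsupp.le_def.mp h2 w
  rw [dS_apply] at h1w h2w
  simp only [Finsupp.add_apply, Finsupp.tsub_apply, dS_apply, Finset.mem_union,
    Finset.mem_sdiff]
  by_cases hA : w ∈ A <;> by_cases hB : w ∈ B <;>
    simp only [hA, hB, true_or, or_true, false_or, or_false, true_and, and_true, false_and,
      and_false, not_true, not_false_iff, if_true, if_false, ite_true, ite_false]
      at h1w h2w ⊢ <;>
    omega

lemma smul_sig_eq (i j : Fin (q+1)) (a : Fin n →₀ ℕ)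
    (h1 : deg S i ≤ a) (h2 : deg S j ≤ a) :
    (monomial (a - dS (S i.1 ∪ S j.1)) (1:k)) • sig k n q S (i, j)
      = Pi.single i (monomial (a - deg S i) (1:k))
        - Pi.single j (monomial (a - deg S j) (1:k)) := by
  classical
  rw [sig, smul_sub]
  congr 1
  · rw [← Pi.single_smul]
    congr 1
    rw [smul_eq_mul, mon_eq_monomial, monomial_mul, mul_one, exponent_identity h1 h2]
  · rw [← Pi.single_smul]
    congr 1
    rw [smul_eq_mul, mon_eq_monomial, monomial_mul, mul_one, Finset.union_comm,
      exponent_identity h2 h1]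

lemma span_fixed (a : Fin n →₀ ℕ) (c : Fin (q+1) → k)
    (hsum : (∑ i : Fin (q+1), (if deg S i ≤ a then c i else 0)) = 0) :
    wcomp S a c ∈ Submodule.span (MvPolynomial (Fin n) k) (Set.range (sig k n q S)) := by
  classical
  set I : Finset (Fin (q+1)) := Finset.univ.filter (fun i => deg S i ≤ a) with hI
  have hw : wcomp S a c = ∑ i ∈ I, Pi.single i (monomial (a - deg S i) (c i)) := by
    funext j
    rw [sum_single_apply]
    simp only [wcomp, hI, Finset.mem_filter, Finset.mem_univ, true_and]
  rcases Finset.eq_empty_or_nonempty I with he | ⟨i0, hi0⟩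
  · rw [hw, he, Finset.sum_empty]; exact Submodule.zero_mem _
  · have hsum' : ∑ i ∈ I, c i = 0 := by
      rw [← hsum, Finset.sum_filter]
    have key : wcomp S a c = ∑ i ∈ I,
        ((C (c i) : MvPolynomial (Fin n) k) * monomial (a - dS (S i.1 ∪ S i0.1)) (1:k)) • sig k n q S (i, i0) := by
      rw [hw]
      have : ∀ i ∈ I, ((C (c i) : MvPolynomial (Fin n) k) * monomial (a - dS (S i.1 ∪ S i0.1)) (1:k)) • sig k n q S (i, i0)
          = (C (c i) : MvPolynomial (Fin n) k) • (Pi.single i (monomial (a - deg S i) (1:k))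
            - Pi.single (M := fun _ => MvPolynomial (Fin n) k) i0 (monomial (a - deg S i0) (1:k))) := by
        intro i hi
        rw [mul_smul, smul_sig_eq i i0 a
          ((Finset.mem_filter.mp hi).2) ((Finset.mem_filter.mp hi0).2)]
      rw [Finset.sum_congr rfl this]
      have expand : ∀ i ∈ I, (C (c i) : MvPolynomial (Fin n) k) • (Pi.single i (monomial (a - deg S i) (1:k))
            - Pi.single (M := fun _ => MvPolynomial (Fin n) k) i0 (monomial (a - deg S i0) (1:k)))
          = Pi.single i (monomial (a - deg S i) (c i))
            - (C (c i) : MvPolynomial (Fin n) k) • Pi.single (M := fun _ => MvPolynomial (Fin n) k) i0 (monomial (a - deg S i0) (1:k)) := by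
        intro i hi
        rw [smul_sub]
        congr 1
        rw [← Pi.single_smul]
        congr 1
        rw [smul_eq_mul, C_mul_monomial, mul_one]
      rw [Finset.sum_congr rfl expand, Finset.sum_sub_distrib, ← Finset.sum_smul]
      have : (∑ i ∈ I, (C (c i) : MvPolynomial (Fin n) k)) = 0 := by
        rw [← map_sum, hsum', map_zero]
      rw [this, zero_smul, sub_zero]
    rw [key]
    exact Submodule.sum_mem _ (fun i hi => Submodule.smul_mem _ _
      (Submodule.subset_span ⟨(i, i0), rfl⟩))

lemma ker_eq_span_sig :
    LinearMap.ker (piMap k n q S)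
      = Submodule.span (MvPolynomial (Fin n) k) (Set.range (sig k n q S)) := by
  classical
  apply le_antisymm
  · intro v hv
    rw [LinearMap.mem_ker] at hv
    set A : Finset (Fin n →₀ ℕ) :=
      Finset.univ.biUnion (fun i : Fin (q+1) => (v i).support.image (· + deg S i)) with hA
    have hdecomp : v = ∑ a ∈ A, wcomp S a (fun i => coeff (a - deg S i) (v i)) := by
      funext i
      rw [Finset.sum_apply]
      have : ∀ a ∈ A, wcomp S a (fun i => coeff (a - deg S i) (v i)) i
          = if deg S i ≤ a then monomial (a - deg S i) (coeff (a - deg S i) (v i)) else 0 := by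
        intro a _; rfl
      rw [Finset.sum_congr rfl this, Finset.sum_ite, Finset.sum_const_zero, add_zero]
      set T : Finset (Fin n →₀ ℕ) := (v i).support.image (· + deg S i) with hT
      have hTsub : T ⊆ A.filter (fun a => deg S i ≤ a) := by
        intro a ha
        rcases Finset.mem_image.mp ha with ⟨b, hb, rfl⟩
        refine Finset.mem_filter.mpr ⟨Finset.mem_biUnion.mpr ⟨i, Finset.mem_univ _, Finset.mem_image.mpr ⟨b, hb, rfl⟩⟩, le_add_self⟩
      have hzero : ∀ a ∈ A.filter (fun a => deg S i ≤ a), a ∉ T →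
          monomial (a - deg S i) (coeff (a - deg S i) (v i)) = 0 := by
        intro a ha haT
        by_contra hne
        have : coeff (a - deg S i) (v i) ≠ 0 := by
          intro h0; rw [h0] at hne; simp at hne
        have hmem : (a - deg S i) ∈ (v i).support := MvPolynomial.mem_support_iff.mpr this
        have : a ∈ T := by
          rw [hT]
          refine Finset.mem_image.mpr ⟨a - deg S i, hmem, ?_⟩
          exact tsub_add_cancel_of_le (Finset.mem_filter.mp ha).2
        exact haT this
      rw [← Finset.sum_subset hTsub hzero]
      rw [hT, Finset.sum_image (by intro x _ y _ h; exact add_right_cancel h)]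
      have : ∀ b ∈ (v i).support,
          monomial (b + deg S i - deg S i) (coeff (b + deg S i - deg S i) (v i))
            = monomial b (coeff b (v i)) := by
        intro b _; rw [add_tsub_cancel_right]
      rw [Finset.sum_congr rfl this]
      exact (MvPolynomial.support_sum_monomial_coeff (v i)).symm
    rw [hdecomp]
    refine Submodule.sum_mem _ (fun a _ => span_fixed a _ ?_)
    have := coeff_piMap (S := S) v a
    rw [hv] at this
    simp only [MvPolynomial.coeff_zero] at this
    exact this.symm
  · rw [Submodule.span_le]
    rintro x ⟨p, rfl⟩
    exact sig_mem_ker p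

end GenC


section RankBound
variable {k : Type} [Field k] {n q : ℕ} {S : ℕ → Finset (Fin n)}

set_option maxHeartbeats 2000000 in
lemma t_le_q {t : ℕ}
    (d : (Fin t → MvPolynomial (Fin n) k) →ₗ[MvPolynomial (Fin n) k]
      (Fin (q + 1) → MvPolynomial (Fin n) k))
    (hinj : Function.Injective d)
    (hrange : LinearMap.range d = LinearMap.ker (piMap k n q S)) : t ≤ q := by
  classical
  set R := MvPolynomial (Fin n) k
  let F := FractionRing R
  let φ : (Fin (q+1) → R) →ₗ[R] (Fin (q+1) → F) :=
    LinearMap.pi (fun i => (Algebra.linearMap R F).comp (LinearMap.proj i))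
  have hφ : LinearMap.ker φ = ⊥ := by
    rw [LinearMap.ker_eq_bot']
    intro v hv
    funext i
    have := congrFun hv i
    simpa [φ, Algebra.linearMap_apply, map_eq_zero_iff _ (IsFractionRing.injective R F)]
      using this
  let πF : (Fin (q+1) → F) →ₗ[F] F :=
    ∑ i : Fin (q+1), (LinearMap.proj i).smulRight (algebraMap R F (mon k n (S i.1)))
  have hπFφ : ∀ x : Fin (q+1) → R, πF (φ x) = algebraMap R F (piMap k n q S x) := by
    intro x
    rw [piMap_apply, map_sum]
    simp [πF, φ, LinearMap.sum_apply, smul_eq_mul, Algebra.linearMap_apply, map_mul]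
  -- the independent family
  let w : Fin t → (Fin (q+1) → F) := fun s => φ (d (Pi.single s 1))
  have hwind : LinearIndependent R w := by
    have h1 : LinearIndependent R (fun s : Fin t => (Pi.single s 1 : Fin t → R)) := by
      have := (Pi.basisFun R (Fin t)).linearIndependent
      simpa [Pi.basisFun] using this
    have h2 := h1.map' d (LinearMap.ker_eq_bot.mpr hinj)
    have h3 := h2.map' φ hφ
    exact h3
  have hwindF : LinearIndependent F w := (LinearIndependent.iff_fractionRing R F).mp hwind
  have hwker : ∀ s, w s ∈ LinearMap.ker πF := by
    intro s
    rw [LinearMap.mem_ker, hπFφ]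
    have : d (Pi.single s 1) ∈ LinearMap.ker (piMap k n q S) := by
      rw [← hrange]; exact ⟨Pi.single s 1, rfl⟩
    rw [LinearMap.mem_ker] at this
    rw [this, map_zero]
  let w' : Fin t → ↥(LinearMap.ker πF) := fun s => ⟨w s, hwker s⟩
  have hw'ind : LinearIndependent F w' := by
    apply LinearIndependent.of_comp (LinearMap.ker πF).subtype
    convert hwindF
    rfl
  have hcard := hw'ind.fintype_card_le_finrank
  rw [Fintype.card_fin] at hcard
  -- the kernel has dimension q
  have hsurj : Function.Surjective πF := by
    intro z
    have hm0 : algebraMap R F (mon k n (S (0 : Fin (q+1)).1)) ≠ 0 := by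
      rw [map_ne_zero_iff _ (IsFractionRing.injective R F)]
      exact mon_ne_zero _
    refine ⟨Pi.single 0 (z * (algebraMap R F (mon k n (S (0 : Fin (q+1)).1)))⁻¹), ?_⟩
    have : ∀ (y : F), πF (Pi.single 0 y) = y * algebraMap R F (mon k n (S (0 : Fin (q+1)).1)) := by
      intro y
      simp only [πF, LinearMap.sum_apply, LinearMap.smulRight_apply, LinearMap.proj_apply,
        smul_eq_mul]
      rw [Finset.sum_congr rfl (fun l _ => by rw [Pi.single_apply])]
      simp only [ite_mul, zero_mul]
      rw [Finset.sum_ite_eq' Finset.univ (0 : Fin (q+1)) _]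
      simp
    rw [this, mul_assoc, inv_mul_cancel₀ hm0, mul_one]
  have hrank := LinearMap.finrank_range_add_finrank_ker πF
  rw [LinearMap.range_eq_top.mpr hsurj] at hrank
  rw [Module.finrank_fintype_fun_eq_card, Fintype.card_fin] at hrank
  have htop : Module.finrank F (↥(⊤ : Submodule F F)) = 1 := by
    simpa using Module.finrank_self F
  rw [htop] at hrank
  omega

end RankBound


section MainAlg
variable {k : Type} [Field k] {n q : ℕ} {S : ℕ → Finset (Fin n)}

lemma sig_diag (i : Fin (q+1)) : sig k n q S (i, i) = 0 := by
  simp [sig]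

set_option maxHeartbeats 2000000 in
lemma main_alg
    (hfree : ∃ (t : ℕ) (d : (Fin t → MvPolynomial (Fin n) k)
      →ₗ[MvPolynomial (Fin n) k] (Fin (q + 1) → MvPolynomial (Fin n) k)),
      Function.Injective d ∧ LinearMap.range d = LinearMap.ker (piMap k n q S)) :
    ∃ (E : Finset (Fin (q+1) × Fin (q+1))) (f : MvPolynomial (Fin n) k),
      (∀ e ∈ E, e.1 ≠ e.2) ∧ E.card ≤ q ∧ constantCoeff f = 1 ∧
      (∀ p : Fin (q+1) × Fin (q+1), f • sig k n q S p ∈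
        Submodule.span (MvPolynomial (Fin n) k) (sig k n q S '' ↑E)) := by
  classical
  obtain ⟨t, d, hinj, hrange⟩ := hfree
  have ht : t ≤ q := t_le_q d hinj hrange
  set R := MvPolynomial (Fin n) k with hR
  set K : Submodule R (Fin (q+1) → R) := LinearMap.ker (piMap k n q S) with hKdef
  have hKspan : K = Submodule.span R (Set.range (sig k n q S)) := ker_eq_span_sig
  let e : (Fin t → R) ≃ₗ[R] ↥K :=
    (LinearEquiv.ofInjective d hinj).trans (LinearEquiv.ofEq _ _ hrange)
  set 𝔪 : Ideal R := RingHom.ker (constantCoeff : R →+* k) with h𝔪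
  -- the "reduction mod the maximal ideal" map
  let θ : ↥K → (Fin t → k) := fun w i => constantCoeff ((e.symm w : Fin t → R) i)
  have hθadd : ∀ w w', θ (w + w') = θ w + θ w' := by
    intro w w'; funext i; simp [θ, map_add]
  have hθsmulR : ∀ (r : R) (w : ↥K), θ (r • w) = constantCoeff r • θ w := by
    intro r w; funext i; simp [θ, map_smul, smul_eq_mul]
  let θL : ↥K →ₗ[k] (Fin t → k) :=
    { toFun := θ
      map_add' := hθadd
      map_smul' := by
        intro c w
        show θ (c • w) = c • θ w
        rw [← algebraMap_smul R c w, hθsmulR]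
        rw [MvPolynomial.algebraMap_eq, constantCoeff_C] }
  have hθLsmulR : ∀ (r : R) (w : ↥K), θL (r • w) = constantCoeff r • θL w := hθsmulR
  have hθker : ∀ w : ↥K, θL w = 0 → (w : Fin (q+1) → R) ∈ 𝔪 • K := by
    intro w hw
    set u0 : Fin t → R := e.symm w with hu0def
    have hu0 : u0 ∈ (𝔪 • ⊤ : Submodule R (Fin t → R)) := by
      have : u0 = ∑ i : Fin t, u0 i • (Pi.single i (1:R) : Fin t → R) := by
        funext j
        rw [Finset.sum_apply]
        simp only [Pi.smul_apply, Pi.single_apply, smul_eq_mul, mul_ite, mul_one, mul_zero]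
        rw [Finset.sum_ite_eq Finset.univ j u0]
        simp
      rw [this]
      refine Submodule.sum_mem _ (fun i _ => Submodule.smul_mem_smul ?_ trivial)
      have := congrFun hw i
      exact RingHom.mem_ker.mpr (by simpa [θL, θ] using this)
    have hw' : (w : Fin (q+1) → R) = K.subtype (e u0) := by
      show _ = ((e (e.symm w) : ↥K) : Fin (q+1) → R)
      rw [LinearEquiv.apply_symm_apply]
    rw [hw']
    have h1 : e u0 ∈ (𝔪 • (⊤ : Submodule R (Fin t → R))).map e.toLinearMap :=
      Submodule.mem_map_of_mem hu0
    rw [Submodule.map_smul''] at h1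
    have h2 : (⊤ : Submodule R (Fin t → R)).map e.toLinearMap = ⊤ := by
      rw [Submodule.map_top, LinearEquiv.range]
    rw [h2] at h1
    have h3 := Submodule.mem_map_of_mem (f := K.subtype) h1
    rw [Submodule.map_smul''] at h3
    rwa [Submodule.map_subtype_top] at h3
  -- syzygies as elements of K
  let sigK : Fin (q+1) × Fin (q+1) → ↥K := fun p => ⟨sig k n q S p, sig_mem_ker p⟩
  let v : Fin (q+1) × Fin (q+1) → (Fin t → k) := fun p => θL (sigK p)
  obtain ⟨I, (hInd : LinearIndependent k (fun x : I => v x)), hmax⟩ := exists_maximal_linearIndepOn k v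
  have hIfin : I.Finite := Set.toFinite I
  let E : Finset (Fin (q+1) × Fin (q+1)) := hIfin.toFinset
  have hEcoe : (↑E : Set (Fin (q+1) × Fin (q+1))) = I := hIfin.coe_toFinset
  -- card bound
  have hEcard : E.card ≤ q := by
    haveI : Fintype ↥I := hIfin.fintype
    have hc := hInd.fintype_card_le_finrank
    rw [Module.finrank_fintype_fun_eq_card, Fintype.card_fin] at hc
    have hEc : E.card = Fintype.card ↥I := by
      have h1 : E = I.toFinset := by
        apply Finset.coe_injective
        rw [hEcoe, Set.coe_toFinset]
      rw [h1, Set.toFinset_card]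
    omega
  -- no diagonal
  have hEdiag : ∀ p ∈ E, p.1 ≠ p.2 := by
    intro p hp hd
    have hpI : p ∈ I := hEcoe ▸ (Finset.mem_coe.mpr hp)
    have hne := hInd.ne_zero ⟨p, hpI⟩
    apply hne
    show v p = 0
    have hz : sigK p = 0 := by
      apply Subtype.ext
      show sig k n q S p = 0
      rw [← Prod.mk.eta (p := p), ← hd, sig_diag]
    simp [v, hz]
  set N : Submodule R (Fin (q+1) → R) := Submodule.span R (sig k n q S '' ↑E) with hN
  -- every element of K is in N + 𝔪K
  have hstep : ∀ w : ↥K, (w : Fin (q+1) → R) ∈ N ⊔ 𝔪 • K := by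
    intro w
    -- θL w lies in the k-span of v '' I
    have hspan : θL w ∈ Submodule.span k (v '' I) := by
      have hw : (w : Fin (q+1) → R) ∈ Submodule.span R (Set.range (sig k n q S)) := by
        rw [← hKspan]; exact w.2
      rw [Submodule.mem_span_range_iff_exists_fun] at hw
      obtain ⟨c, hc⟩ := hw
      have hwsum : w = ∑ p, c p • sigK p := by
        apply Subtype.ext
        push_cast
        exact hc.symm
      rw [hwsum, map_sum]
      refine Submodule.sum_mem _ (fun p _ => ?_)
      have : θL (c p • sigK p) = constantCoeff (c p) • v p := hθsmulR (c p) (sigK p)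
      rw [this]
      refine Submodule.smul_mem _ _ ?_
      by_cases hpI : p ∈ I
      · exact Submodule.subset_span ⟨p, hpI, rfl⟩
      · obtain ⟨a, ha0, hamem⟩ := hmax p hpI
        have : v p = a⁻¹ • (a • v p) := by rw [smul_smul, inv_mul_cancel₀ ha0, one_smul]
        rw [this]
        exact Submodule.smul_mem _ _ hamem
    rw [Finsupp.mem_span_image_iff_linearCombination] at hspan
    obtain ⟨l, hlsupp, hlsum⟩ := hspan
    set u : ↥K := ∑ p ∈ l.support, (C (l p) : R) • sigK p with hu
    have hθu : θL u = θL w := by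
      rw [hu, map_sum]
      rw [← hlsum, Finsupp.linearCombination_apply, Finsupp.sum]
      refine Finset.sum_congr rfl (fun p _ => ?_)
      rw [hθLsmulR]
      simp [v]
    have hdiff : ((w - u : ↥K) : Fin (q+1) → R) ∈ 𝔪 • K := by
      apply hθker
      rw [map_sub, hθu, sub_self]
    have huN : (u : Fin (q+1) → R) ∈ N := by
      push_cast [hu]
      refine Submodule.sum_mem _ (fun p hp => ?_)
      refine Submodule.smul_mem _ _ (Submodule.subset_span ?_)
      refine ⟨p, ?_, rfl⟩
      rw [hEcoe]
      exact hlsupp hp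
    have : (w : Fin (q+1) → R) = (u : Fin (q+1) → R) + ((w - u : ↥K) : Fin (q+1) → R) := by
      push_cast; ring
    rw [this]
    exact Submodule.add_mem_sup huN hdiff
  -- Nakayama
  set P : Submodule R ((Fin (q+1) → R) ⧸ N) := K.map N.mkQ with hP
  have hPle : P ≤ 𝔪 • P := by
    rintro _ ⟨y, hy, rfl⟩
    have := hstep ⟨y, hy⟩
    rw [Submodule.mem_sup] at this
    obtain ⟨y₁, hy₁, y₂, hy₂, hsum⟩ := this
    have hsum' : y₁ + y₂ = y := hsum
    have : N.mkQ y = N.mkQ y₂ := by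
      rw [← hsum', map_add]
      have : N.mkQ y₁ = 0 := by
        rwa [Submodule.mkQ_apply, Submodule.Quotient.mk_eq_zero]
      rw [this, zero_add]
    rw [this]
    have : N.mkQ y₂ ∈ (𝔪 • K).map N.mkQ := Submodule.mem_map_of_mem hy₂
    rwa [Submodule.map_smul''] at this
  have hKfg : K.FG := by
    rw [hKspan]
    exact Submodule.fg_span (Set.finite_range _)
  have hPfg : P.FG := hKfg.map _
  obtain ⟨r, hr1, hr0⟩ :=
    Submodule.exists_sub_one_mem_and_smul_eq_zero_of_fg_of_le_smul 𝔪 P hPfg hPle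
  have hrc : constantCoeff r = 1 := by
    have : constantCoeff (r - 1) = 0 := hr1
    rw [map_sub, map_one] at this
    rwa [sub_eq_zero] at this
  refine ⟨E, r, hEdiag, hEcard, hrc, fun p => ?_⟩
  have h1 : N.mkQ (sig k n q S p) ∈ P := Submodule.mem_map_of_mem (sig_mem_ker p)
  have h2 := hr0 _ h1
  have h3 : N.mkQ (r • sig k n q S p) = 0 := by
    rw [map_smul]; exact h2
  rwa [Submodule.mkQ_apply, Submodule.Quotient.mk_eq_zero] at h3

end MainAlg


section Crossing
variable {k : Type} [Field k] {n q : ℕ} {S : ℕ → Finset (Fin n)}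

def cross (C : Finset (Fin (q+1))) (e : Fin (q+1) × Fin (q+1)) : Prop :=
  (e.1 ∈ C ∧ e.2 ∉ C) ∨ (e.2 ∈ C ∧ e.1 ∉ C)

lemma psi_sig_noncross {C : Finset (Fin (q+1))} {e : Fin (q+1) × Fin (q+1)}
    (h : ¬ cross C e) : psi k n q S C (sig k n q S e) = 0 := by
  classical
  rw [psi_sig]
  rcases e with ⟨a, b⟩
  simp only [cross, not_or, not_and, not_not] at h
  by_cases ha : a ∈ C <;> by_cases hb : b ∈ C <;>
    simp_all

lemma psi_sig_cross {C : Finset (Fin (q+1))} {e : Fin (q+1) × Fin (q+1)}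
    (h : cross C e) : psi k n q S C (sig k n q S e) = mon k n (S e.1.1 ∪ S e.2.1) ∨
      psi k n q S C (sig k n q S e) = - mon k n (S e.1.1 ∪ S e.2.1) := by
  classical
  rw [psi_sig]
  rcases h with ⟨h1, h2⟩ | ⟨h1, h2⟩
  · left; simp [h1, h2]
  · right; simp [h1, h2]

lemma psi_f_sig {C : Finset (Fin (q+1))} {i j : Fin (q+1)} (f : MvPolynomial (Fin n) k)
    (hi : i ∈ C) (hj : j ∉ C) :
    psi k n q S C (f • sig k n q S (i, j)) = f * mon k n (S i.1 ∪ S j.1) := by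
  rw [map_smul, psi_sig, smul_eq_mul]
  simp [hi, hj]

lemma cross_exists {E : Finset (Fin (q+1) × Fin (q+1))} {f : MvPolynomial (Fin n) k}
    (hf : constantCoeff f = 1)
    (hEf : ∀ p : Fin (q+1) × Fin (q+1), f • sig k n q S p ∈
      Submodule.span (MvPolynomial (Fin n) k) (sig k n q S '' ↑E))
    (C : Finset (Fin (q+1))) {i j : Fin (q+1)} (hi : i ∈ C) (hj : j ∉ C) :
    ∃ e ∈ E, cross C e := by
  classical
  by_contra hno
  push_neg at hno
  have hmem := hEf (i, j)
  rw [← Finset.coe_image, Submodule.mem_span_finset] at hmem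
  obtain ⟨g, -, hg⟩ := hmem
  have happ := congrArg (psi k n q S C) hg
  rw [map_sum, psi_f_sig f hi hj] at happ
  simp only [map_smul] at happ
  have hz : ∀ u ∈ E.image (sig k n q S), g u • psi k n q S C u = 0 := by
    intro u hu
    obtain ⟨e, he, rfl⟩ := Finset.mem_image.mp hu
    rw [psi_sig_noncross (hno e he), smul_zero]
  rw [Finset.sum_congr rfl hz, Finset.sum_const_zero] at happ
  have hfne : f ≠ 0 := by
    intro h0; rw [h0, map_zero] at hf; exact one_ne_zero hf.symm
  exact mul_ne_zero hfne (mon_ne_zero _) happ.symm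

lemma cross_dom {E : Finset (Fin (q+1) × Fin (q+1))} {f : MvPolynomial (Fin n) k}
    (hf : constantCoeff f = 1)
    (hEf : ∀ p : Fin (q+1) × Fin (q+1), f • sig k n q S p ∈
      Submodule.span (MvPolynomial (Fin n) k) (sig k n q S '' ↑E))
    (C : Finset (Fin (q+1))) {i j : Fin (q+1)} (hi : i ∈ C) (hj : j ∉ C)
    {e₀ : Fin (q+1) × Fin (q+1)} (he₀ : e₀ ∈ E) (hcr : cross C e₀)
    (huniq : ∀ e ∈ E, cross C e → e = e₀) :
    S e₀.1.1 ∪ S e₀.2.1 ⊆ S i.1 ∪ S j.1 := by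
  classical
  have hmem := hEf (i, j)
  rw [← Finset.coe_image, Submodule.mem_span_finset] at hmem
  obtain ⟨g, -, hg⟩ := hmem
  have happ := congrArg (psi k n q S C) hg
  rw [map_sum, psi_f_sig f hi hj] at happ
  simp only [map_smul] at happ
  set u₀ := sig k n q S e₀ with hu₀
  have hsum : ∑ u ∈ E.image (sig k n q S), g u • psi k n q S C u
      = g u₀ • psi k n q S C u₀ := by
    refine Finset.sum_eq_single_of_mem u₀ (Finset.mem_image.mpr ⟨e₀, he₀, rfl⟩) ?_
    intro u hu hne
    obtain ⟨e, he, rfl⟩ := Finset.mem_image.mp hu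
    by_cases hc : cross C e
    · exact absurd (by rw [huniq e he hc] : sig k n q S e = u₀) hne
    · rw [psi_sig_noncross hc, smul_zero]
  rw [hsum] at happ
  rcases psi_sig_cross (k := k) (n := n) (q := q) (S := S) (C := C) (e := e₀) hcr with hh | hh
  · rw [hh, smul_eq_mul] at happ
    exact key_div hf happ.symm
  · rw [hh, smul_eq_mul, mul_neg, ← neg_mul] at happ
    exact key_div hf happ.symm

end Crossing


end S8

namespace S8G


variable {ι : Type*} [DecidableEq ι] [Fintype ι]

def adjE (E : Finset (ι × ι)) (u v : ι) : Prop := (u, v) ∈ E ∨ (v, u) ∈ E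

def reach (E : Finset (ι × ι)) : ι → ι → Prop := Relation.ReflTransGen (adjE E)

lemma adjE_symm {E : Finset (ι × ι)} {u v : ι} (h : adjE E u v) : adjE E v u := h.symm

lemma reach_symm {E : Finset (ι × ι)} {u v : ι} (h : reach E u v) : reach E v u :=
  (@Relation.ReflTransGen.stdSymm _ _ ⟨fun _ _ h => adjE_symm h⟩).symm _ _ h

lemma reach_mono {E E' : Finset (ι × ι)} (hE : E ⊆ E') {u v : ι} (h : reach E u v) :
    reach E' u v :=
  Relation.ReflTransGen.mono (r := adjE E) (p := adjE E') (fun _ _ ha => ha.imp (@hE _) (@hE _)) _ _ h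

def classFun (E : Finset (ι × ι)) (v : ι) : Finset ι :=
  @Finset.filter _ (fun w => reach E v w) (Classical.decPred _) Finset.univ

lemma mem_classFun {E : Finset (ι × ι)} {v w : ι} : w ∈ classFun E v ↔ reach E v w := by
  classical
  simp [classFun]

lemma classFun_eq_of_reach {E : Finset (ι × ι)} {v w : ι} (h : reach E v w) :
    classFun E v = classFun E w := by
  ext x
  rw [mem_classFun, mem_classFun]
  exact ⟨fun hx => (reach_symm h).trans hx, fun hx => h.trans hx⟩

lemma reach_of_classFun_eq {E : Finset (ι × ι)} {v w : ι} (h : classFun E v = classFun E w) :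
    reach E v w := by
  have : w ∈ classFun E w := mem_classFun.mpr Relation.ReflTransGen.refl
  rw [← h] at this
  exact mem_classFun.mp this

lemma reach_empty {u v : ι} (h : reach (∅ : Finset (ι × ι)) u v) : u = v := by
  induction h with
  | refl => rfl
  | tail _ hadj ih => rcases hadj with h | h <;> simp at h

lemma reach_insert {E : Finset (ι × ι)} {e : ι × ι} {u v : ι}
    (h : reach (insert e E) u v) :
    reach E u v ∨ (reach E u e.1 ∧ reach E e.2 v) ∨ (reach E u e.2 ∧ reach E e.1 v) := by
  induction h with
  | refl => exact Or.inl Relation.ReflTransGen.refl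
  | @tail w v' hw hadj ih =>
    have step : adjE E w v' → (reach E u v' ∨ (reach E u e.1 ∧ reach E e.2 v')
        ∨ (reach E u e.2 ∧ reach E e.1 v')) := by
      intro ha
      rcases ih with h1 | ⟨h1, h2⟩ | ⟨h1, h2⟩
      · exact Or.inl (h1.tail ha)
      · exact Or.inr (Or.inl ⟨h1, h2.tail ha⟩)
      · exact Or.inr (Or.inr ⟨h1, h2.tail ha⟩)
    rcases hadj with hm | hm <;> rw [Finset.mem_insert] at hm
    · rcases hm with he | hm
      · -- (w, v') = e
        have hw1 : w = e.1 := by rw [← he]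
        have hv2 : v' = e.2 := by rw [← he]
        subst hw1; subst hv2
        rcases ih with h1 | ⟨h1, h2⟩ | ⟨h1, h2⟩
        · exact Or.inr (Or.inl ⟨h1, Relation.ReflTransGen.refl⟩)
        · exact Or.inr (Or.inl ⟨h1, Relation.ReflTransGen.refl⟩)
        · exact Or.inl h1
      · exact step (Or.inl hm)
    · rcases hm with he | hm
      · -- (v', w) = e
        have hv1 : v' = e.1 := by rw [← he]
        have hw2 : w = e.2 := by rw [← he]
        subst hv1; subst hw2
        rcases ih with h1 | ⟨h1, h2⟩ | ⟨h1, h2⟩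
        · exact Or.inr (Or.inr ⟨h1, Relation.ReflTransGen.refl⟩)
        · exact Or.inl h1
        · exact Or.inl (h1.trans (reach_symm h2))
      · exact step (Or.inr hm)

def nclasses (E : Finset (ι × ι)) : ℕ := (Finset.univ.image (classFun E)).card

lemma nclasses_empty : nclasses (∅ : Finset (ι × ι)) = Fintype.card ι := by
  classical
  have h : ∀ v : ι, classFun (∅ : Finset (ι × ι)) v = {v} := by
    intro v
    ext w
    rw [mem_classFun]
    constructor
    · intro h; rw [Finset.mem_singleton]; exact (reach_empty h).symm
    · intro h; rw [Finset.mem_singleton] at h; subst h; exact Relation.ReflTransGen.refl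
  unfold nclasses
  rw [Finset.image_congr (fun v _ => h v)]
  rw [Finset.card_image_of_injective _ (fun a b hab => by
    simpa using Finset.singleton_injective hab)]
  simp

lemma nclasses_insert_ge {E : Finset (ι × ι)} (e : ι × ι) :
    nclasses E ≤ nclasses (insert e E) + 1 := by
  classical
  set A := Finset.univ.image (classFun E) with hA
  set A' := Finset.univ.image (classFun (insert e E)) with hA'
  -- map each E-class (except that of e.1) to its (insert e E)-class, injectively
  have hmap : ∀ X ∈ A.erase (classFun E e.1), ∃ v : ι, classFun E v = X := by
    intro X hX
    have := Finset.mem_of_mem_erase hX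
    rw [hA, Finset.mem_image] at this
    obtain ⟨v, _, hv⟩ := this
    exact ⟨v, hv⟩
  choose rep hrep using hmap
  have hinj : Set.InjOn (fun X => if hX : X ∈ A.erase (classFun E e.1)
      then classFun (insert e E) (rep X hX) else ∅) ↑(A.erase (classFun E e.1)) := by
    intro X hX Y hY hXY
    rw [Finset.mem_coe] at hX hY
    simp only [dif_pos hX, dif_pos hY] at hXY
    have hr := reach_of_classFun_eq hXY
    rcases reach_insert hr with h1 | ⟨h1, h2⟩ | ⟨h1, h2⟩
    · rw [← hrep X hX, ← hrep Y hY, classFun_eq_of_reach h1]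
    · exfalso
      have : X = classFun E e.1 := by rw [← hrep X hX, classFun_eq_of_reach h1]
      exact (Finset.ne_of_mem_erase hX) this
    · exfalso
      have : Y = classFun E e.1 := by rw [← hrep Y hY, classFun_eq_of_reach h2]
      exact (Finset.ne_of_mem_erase hY) this
  have hmapsto : ∀ X ∈ A.erase (classFun E e.1),
      (fun X => if hX : X ∈ A.erase (classFun E e.1)
        then classFun (insert e E) (rep X hX) else ∅) X ∈ A' := by
    intro X hX
    simp only [dif_pos hX]
    rw [hA', Finset.mem_image]
    exact ⟨rep X hX, Finset.mem_univ _, rfl⟩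
  have hcard := Finset.card_le_card_of_injOn _ hmapsto hinj
  have herase : A.card ≤ (A.erase (classFun E e.1)).card + 1 := by
    by_cases hm : classFun E e.1 ∈ A
    · rw [Finset.card_erase_of_mem hm]
      omega
    · rw [Finset.erase_eq_of_notMem hm]
      omega
  calc A.card ≤ (A.erase (classFun E e.1)).card + 1 := herase
    _ ≤ A'.card + 1 := by omega

lemma card_le_card_add_nclasses (E : Finset (ι × ι)) :
    Fintype.card ι ≤ E.card + nclasses E := by
  classical
  induction E using Finset.induction_on with
  | empty => rw [nclasses_empty]; simp
  | insert e E' hnm ih =>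
    have h1 := nclasses_insert_ge (E := E') e
    rw [Finset.card_insert_of_notMem hnm]
    omega

lemma reach_stay {V : Finset ι} {E : Finset (ι × ι)}
    (hEV : ∀ e ∈ E, e.1 ∈ V ∧ e.2 ∈ V) {v w : ι} (hv : v ∈ V) (h : reach E v w) : w ∈ V := by
  induction h with
  | refl => exact hv
  | tail _ hadj ih =>
    rcases hadj with h | h
    · exact (hEV _ h).2
    · exact (hEV _ h).1

lemma classFun_isolated {E : Finset (ι × ι)} {v : ι}
    (h : ∀ e ∈ E, e.1 ≠ v ∧ e.2 ≠ v) : classFun E v = {v} := by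
  ext w
  rw [mem_classFun, Finset.mem_singleton]
  constructor
  · intro hr
    rcases (Relation.ReflTransGen.cases_head hr) with h1 | ⟨c, hc1, _⟩
    · exact h1.symm
    · exfalso
      rcases hc1 with hm | hm
      · exact (h _ hm).1 rfl
      · exact (h _ hm).2 rfl
  · intro h; subst h; exact Relation.ReflTransGen.refl

/-- a connected graph on vertex set `V` has at least `|V| - 1` edges -/
lemma conn_card {V : Finset ι} {E : Finset (ι × ι)}
    (hEV : ∀ e ∈ E, e.1 ∈ V ∧ e.2 ∈ V)
    (hconn : ∀ u ∈ V, ∀ v ∈ V, reach E u v) (hV : V.Nonempty) :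
    V.card ≤ E.card + 1 := by
  classical
  obtain ⟨v0, hv0⟩ := hV
  have hclass : ∀ v ∈ V, classFun E v = V.filter (fun w => True) ⊔ ∅ ∨ True := by
    intro v _; right; trivial
  -- classes: vertices in V all have class = (V : as a finset of reachable pts) ; others are singletons
  have hclassV : ∀ v ∈ V, classFun E v = classFun E v0 := by
    intro v hv
    exact (classFun_eq_of_reach (hconn v0 hv0 v hv)).symm
  have hiso : ∀ v : ι, v ∉ V → classFun E v = {v} := by
    intro v hv
    apply classFun_isolated
    intro e he
    exact ⟨fun h => hv (h ▸ (hEV e he).1), fun h => hv (h ▸ (hEV e he).2)⟩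
  have himage : Finset.univ.image (classFun E) ⊆
      insert (classFun E v0) ((Finset.univ \ V).image (fun v => ({v} : Finset ι))) := by
    intro X hX
    rw [Finset.mem_image] at hX
    obtain ⟨v, _, rfl⟩ := hX
    by_cases hv : v ∈ V
    · rw [hclassV v hv]; exact Finset.mem_insert_self _ _
    · rw [hiso v hv]
      exact Finset.mem_insert_of_mem (Finset.mem_image.mpr ⟨v, by simp [hv], rfl⟩)
  have hnc : nclasses E ≤ 1 + (Fintype.card ι - V.card) := by
    have h1 := Finset.card_le_card himage
    have h2 : ((Finset.univ \ V).image (fun v => ({v} : Finset ι))).card = Fintype.card ι - V.card := by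
      rw [Finset.card_image_of_injective _ Finset.singleton_injective]
      rw [Finset.card_sdiff_of_subset (Finset.subset_univ V)]
      simp
    calc nclasses E ≤ (insert (classFun E v0) ((Finset.univ \ V).image (fun v => ({v} : Finset ι)))).card := h1
      _ ≤ ((Finset.univ \ V).image (fun v => ({v} : Finset ι))).card + 1 := Finset.card_insert_le _ _
      _ = 1 + (Fintype.card ι - V.card) := by omega
  have hmain := card_le_card_add_nclasses E
  have hVle : V.card ≤ Fintype.card ι := by
    simpa using Finset.card_le_card (Finset.subset_univ V)
  omega

def degE (E : Finset (ι × ι)) (v : ι) : ℕ := (E.filter (fun e => e.1 = v ∨ e.2 = v)).card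

lemma handshake {E : Finset (ι × ι)} (hE : ∀ e ∈ E, e.1 ≠ e.2) :
    ∑ v : ι, degE E v = 2 * E.card := by
  classical
  unfold degE
  have : ∀ v : ι, (E.filter (fun e => e.1 = v ∨ e.2 = v)).card
      = ∑ e ∈ E, (if e.1 = v ∨ e.2 = v then 1 else 0) := by
    intro v; rw [Finset.card_filter]
  rw [Finset.sum_congr rfl (fun v _ => this v), Finset.sum_comm]
  have hinner : ∀ e ∈ E, (∑ v : ι, if e.1 = v ∨ e.2 = v then 1 else 0) = 2 := by
    intro e he
    have : (∑ v : ι, if e.1 = v ∨ e.2 = v then 1 else 0)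
        = (Finset.univ.filter (fun v => e.1 = v ∨ e.2 = v)).card := by
      rw [Finset.card_filter]
    rw [this]
    have : Finset.univ.filter (fun v => e.1 = v ∨ e.2 = v) = {e.1, e.2} := by
      ext v
      simp [eq_comm]
    rw [this, Finset.card_insert_of_notMem (by simpa using hE e he), Finset.card_singleton]
  rw [Finset.sum_congr rfl hinner]
  rw [Finset.sum_const, smul_eq_mul, mul_comm]


def Cr (C : Finset ι) (e : ι × ι) : Prop := (e.1 ∈ C ∧ e.2 ∉ C) ∨ (e.2 ∈ C ∧ e.1 ∉ C)

theorem comb {α : Type*} [DecidableEq α] (V : Finset ι) :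
    ∀ (T : ι → Finset α) (E : Finset (ι × ι)),
    (∀ e ∈ E, e.1 ∈ V ∧ e.2 ∈ V ∧ e.1 ≠ e.2) →
    (∀ i ∈ V, ∀ j ∈ V, i ≠ j → ¬ T i ⊆ T j) →
    (∀ i ∈ V, (T i).Nonempty) →
    (E.card + 1 ≤ V.card) →
    (∀ C : Finset ι, C ⊆ V → ∀ i ∈ C, ∀ j ∈ V, j ∉ C → ∃ e ∈ E, Cr C e) →
    (∀ C : Finset ι, C ⊆ V → ∀ i ∈ C, ∀ j ∈ V, j ∉ C → ∀ e₀ ∈ E, Cr C e₀ →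
      (∀ e ∈ E, Cr C e → e = e₀) → T e₀.1 ∪ T e₀.2 ⊆ T i ∪ T j) →
    V.card ≤ (V.biUnion T).card := by
  classical
  induction V using Finset.strongInduction with
  | _ V IH =>
  intro T E hEV hanti hne hcard hcross hdom
  by_cases h0 : V.card = 0
  · omega
  by_cases h1 : V.card = 1
  · obtain ⟨v, rfl⟩ := Finset.card_eq_one.mp h1
    rw [Finset.singleton_biUnion, Finset.card_singleton]
    exact Finset.Nonempty.card_pos (hne v (Finset.mem_singleton_self v))
  have hV2 : 2 ≤ V.card := by omega
  -- connectivity of the syzygy graph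
  have hconn : ∀ u ∈ V, ∀ w ∈ V, reach E u w := by
    intro u hu w hw
    by_contra hr
    set C := V.filter (fun x => reach E u x) with hC
    have hCV : C ⊆ V := Finset.filter_subset _ _
    have huC : u ∈ C := Finset.mem_filter.mpr ⟨hu, Relation.ReflTransGen.refl⟩
    have hwC : w ∉ C := fun hwc => hr (Finset.mem_filter.mp hwc).2
    obtain ⟨e, he, hcr⟩ := hcross C hCV u huC w hw hwC
    rcases hcr with ⟨hc1, hc2⟩ | ⟨hc1, hc2⟩
    · exact hc2 (Finset.mem_filter.mpr ⟨(hEV e he).2.1,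
        ((Finset.mem_filter.mp hc1).2).tail (Or.inl he)⟩)
    · exact hc2 (Finset.mem_filter.mpr ⟨(hEV e he).1,
        ((Finset.mem_filter.mp hc1).2).tail (Or.inr he)⟩)
  have hE1 : V.card ≤ E.card + 1 :=
    conn_card (fun e he => ⟨(hEV e he).1, (hEV e he).2.1⟩) hconn
      (Finset.card_pos.mp (by omega))
  have hEeq : E.card + 1 = V.card := by omega
  -- every vertex has degree at least one
  have hdeg1 : ∀ v ∈ V, 1 ≤ degE E v := by
    intro v hv
    obtain ⟨w, hw, hwv⟩ := Finset.exists_mem_ne (s := V) (by omega) v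
    obtain ⟨e, he, hcr⟩ := hcross {v} (Finset.singleton_subset_iff.mpr hv) v
      (Finset.mem_singleton_self v) w hw (by simpa using hwv)
    have hm : e.1 = v ∨ e.2 = v := by
      rcases hcr with ⟨hc1, _⟩ | ⟨hc1, _⟩
      · exact Or.inl (Finset.mem_singleton.mp hc1)
      · exact Or.inr (Finset.mem_singleton.mp hc1)
    exact Finset.card_pos.mpr ⟨e, Finset.mem_filter.mpr ⟨he, hm⟩⟩
  -- there is a leaf
  have hlf : ∃ ℓ ∈ V, degE E ℓ = 1 := by
    by_contra hcon
    push_neg at hcon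
    have h2 : ∀ v ∈ V, 2 ≤ degE E v := by
      intro v hv
      have ha := hdeg1 v hv
      have hb := hcon v hv
      omega
    have hsum := handshake (fun e he => (hEV e he).2.2)
    have hle : ∑ v ∈ V, degE E v ≤ ∑ v : ι, degE E v :=
      Finset.sum_le_sum_of_subset (Finset.subset_univ V)
    have hge : 2 * V.card ≤ ∑ v ∈ V, degE E v := by
      calc 2 * V.card = ∑ _v ∈ V, 2 := by rw [Finset.sum_const, smul_eq_mul, mul_comm]
        _ ≤ ∑ v ∈ V, degE E v := Finset.sum_le_sum h2
    omega
  obtain ⟨ℓ, hℓV, hdegℓ⟩ := hlf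
  obtain ⟨e₀, he₀⟩ := Finset.card_eq_one.mp hdegℓ
  have he₀mem : e₀ ∈ E.filter (fun e => e.1 = ℓ ∨ e.2 = ℓ) := by
    rw [he₀]; exact Finset.mem_singleton_self e₀
  have he₀E : e₀ ∈ E := (Finset.mem_filter.mp he₀mem).1
  have he₀ℓ : e₀.1 = ℓ ∨ e₀.2 = ℓ := (Finset.mem_filter.mp he₀mem).2
  have huniqℓ : ∀ e ∈ E, (e.1 = ℓ ∨ e.2 = ℓ) → e = e₀ := by
    intro e he hm
    have : e ∈ E.filter (fun e => e.1 = ℓ ∨ e.2 = ℓ) := Finset.mem_filter.mpr ⟨he, hm⟩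
    rw [he₀] at this
    exact Finset.mem_singleton.mp this
  obtain ⟨p, hpV, hpne, hor⟩ : ∃ p, p ∈ V ∧ p ≠ ℓ ∧
      ((e₀.1 = ℓ ∧ e₀.2 = p) ∨ (e₀.1 = p ∧ e₀.2 = ℓ)) := by
    rcases he₀ℓ with h | h
    · refine ⟨e₀.2, (hEV e₀ he₀E).2.1, ?_, Or.inl ⟨h, rfl⟩⟩
      rw [← h]; exact fun hh => (hEV e₀ he₀E).2.2 hh.symm
    · refine ⟨e₀.1, (hEV e₀ he₀E).1, ?_, Or.inr ⟨rfl, h⟩⟩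
      rw [← h]; exact (hEV e₀ he₀E).2.2
  have hTe₀ : T e₀.1 ∪ T e₀.2 = T ℓ ∪ T p := by
    rcases hor with ⟨ha, hb⟩ | ⟨ha, hb⟩ <;> rw [ha, hb]
    rw [Finset.union_comm]
  have hCr₀ : Cr ({ℓ} : Finset ι) e₀ := by
    rcases hor with ⟨ha, hb⟩ | ⟨ha, hb⟩
    · exact Or.inl ⟨by rw [ha]; exact Finset.mem_singleton_self ℓ,
        by rw [hb]; simpa using hpne⟩
    · exact Or.inr ⟨by rw [hb]; exact Finset.mem_singleton_self ℓ,
        by rw [ha]; simpa using hpne⟩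
  have hCruniq : ∀ e ∈ E, Cr ({ℓ} : Finset ι) e → e = e₀ := by
    intro e he hc
    refine huniqℓ e he ?_
    rcases hc with ⟨hc1, _⟩ | ⟨hc1, _⟩
    · exact Or.inl (Finset.mem_singleton.mp hc1)
    · exact Or.inr (Finset.mem_singleton.mp hc1)
  have hD : ∀ j ∈ V, j ≠ ℓ → T p \ T ℓ ⊆ T j := by
    intro j hj hjℓ
    have hdj := hdom {ℓ} (Finset.singleton_subset_iff.mpr hℓV) ℓ (Finset.mem_singleton_self ℓ)
      j hj (by simpa using hjℓ) e₀ he₀E hCr₀ hCruniq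
    rw [hTe₀] at hdj
    intro x hx
    have hx' := Finset.mem_sdiff.mp hx
    have : x ∈ T ℓ ∪ T j := hdj (Finset.mem_union_right _ hx'.1)
    rcases Finset.mem_union.mp this with h | h
    · exact absurd h hx'.2
    · exact h
  set D := T p \ T ℓ with hDdef
  have hDne : D.Nonempty := Finset.sdiff_nonempty.mpr (hanti p hpV ℓ hℓV hpne)
  by_cases hB : ∃ j ∈ V, j ≠ ℓ ∧ T j ⊆ D
  · -- degenerate case : V = {ℓ, p}
    obtain ⟨j₀, hj₀V, hj₀ℓ, hj₀⟩ := hB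
    have hj₀p : j₀ = p := by
      by_contra hne'
      exact hanti j₀ hj₀V p hpV hne' (hj₀.trans Finset.sdiff_subset)
    subst hj₀p
    have hTpD : T j₀ = D := Finset.Subset.antisymm hj₀ Finset.sdiff_subset
    have hdisj : Disjoint (T j₀) (T ℓ) := by
      rw [Finset.disjoint_left]
      intro x hx
      exact (Finset.mem_sdiff.mp (hj₀ hx)).2
    have hVsub : V ⊆ {ℓ, j₀} := by
      intro j hj
      by_contra hjm
      rw [Finset.mem_insert, Finset.mem_singleton] at hjm
      push_neg at hjm
      have h1 := hD j hj hjm.1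
      rw [← hTpD] at h1
      exact hanti j₀ hj₀V j hj (fun hh => hjm.2 hh.symm) h1
    have hVle : V.card ≤ 2 := by
      have hc1 := Finset.card_le_card hVsub
      have hc2 : ({ℓ, j₀} : Finset ι).card ≤ 2 := by
        apply (Finset.card_insert_le _ _).trans
        simp
      omega
    have hTsub : T ℓ ∪ T j₀ ⊆ V.biUnion T :=
      Finset.union_subset (Finset.subset_biUnion_of_mem T hℓV)
        (Finset.subset_biUnion_of_mem T hj₀V)
    have : 2 ≤ (T ℓ ∪ T j₀).card := by
      rw [Finset.card_union_of_disjoint hdisj.symm]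
      have h1 := Finset.Nonempty.card_pos (hne ℓ hℓV)
      have h2 := Finset.Nonempty.card_pos (hne j₀ hj₀V)
      omega
    have := this.trans (Finset.card_le_card hTsub)
    omega
  · -- main inductive case
    push_neg at hB
    set V' := V.erase ℓ with hV'def
    set E' := E.erase e₀ with hE'def
    set T' : ι → Finset α := fun j => T j \ D with hT'def
    have hV'ss : V' ⊂ V := Finset.erase_ssubset hℓV
    have hmemV' : ∀ j, j ∈ V' ↔ (j ∈ V ∧ j ≠ ℓ) := by
      intro j; rw [Finset.mem_erase]; tauto
    have hEV' : ∀ e ∈ E', e.1 ∈ V' ∧ e.2 ∈ V' ∧ e.1 ≠ e.2 := by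
      intro e he
      have heE := Finset.mem_of_mem_erase he
      have hene := Finset.ne_of_mem_erase he
      have h1 : e.1 ≠ ℓ := fun h => hene (huniqℓ e heE (Or.inl h))
      have h2 : e.2 ≠ ℓ := fun h => hene (huniqℓ e heE (Or.inr h))
      exact ⟨Finset.mem_erase.mpr ⟨h1, (hEV e heE).1⟩,
        Finset.mem_erase.mpr ⟨h2, (hEV e heE).2.1⟩, (hEV e heE).2.2⟩
    have hanti' : ∀ i ∈ V', ∀ j ∈ V', i ≠ j → ¬ T' i ⊆ T' j := by
      intro i hi j hj hij hsub
      apply hanti i (Finset.mem_of_mem_erase hi) j (Finset.mem_of_mem_erase hj) hij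
      intro x hx
      by_cases hxD : x ∈ D
      · exact hD j (Finset.mem_of_mem_erase hj) (Finset.ne_of_mem_erase hj) hxD
      · exact (Finset.mem_sdiff.mp (hsub (Finset.mem_sdiff.mpr ⟨hx, hxD⟩))).1
    have hne'' : ∀ i ∈ V', (T' i).Nonempty := by
      intro i hi
      exact Finset.sdiff_nonempty.mpr
        (hB i (Finset.mem_of_mem_erase hi) (Finset.ne_of_mem_erase hi))
    have hcard' : E'.card + 1 ≤ V'.card := by
      rw [hE'def, hV'def, Finset.card_erase_of_mem he₀E, Finset.card_erase_of_mem hℓV]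
      have hEpos : 1 ≤ E.card := Finset.card_pos.mpr ⟨e₀, he₀E⟩
      omega
    -- transfer of crossings between `C` and its possible extension by `ℓ`
    have hCt : ∀ C : Finset ι, C ⊆ V' →
        ((if p ∈ C then insert ℓ C else C) ⊆ V ∧
          ¬ Cr (if p ∈ C then insert ℓ C else C) e₀ ∧
          (∀ x, x ≠ ℓ → (x ∈ (if p ∈ C then insert ℓ C else C) ↔ x ∈ C))) := by
      intro C hCV'
      have hℓC : ℓ ∉ C := fun h => (Finset.mem_erase.mp (hCV' h)).1 rfl
      refine ⟨?_, ?_, ?_⟩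
      · split_ifs with hpC
        · intro x hx
          rcases Finset.mem_insert.mp hx with h | h
          · rw [h]; exact hℓV
          · exact Finset.mem_of_mem_erase (hCV' h)
        · exact fun x hx => Finset.mem_of_mem_erase (hCV' hx)
      · split_ifs with hpC
        · intro hcr
          have hℓm : ℓ ∈ insert ℓ C := Finset.mem_insert_self _ _
          have hpm : p ∈ insert ℓ C := Finset.mem_insert_of_mem hpC
          have h1m : e₀.1 ∈ insert ℓ C := by
            rcases hor with ⟨ha, _⟩ | ⟨ha, _⟩
            · rw [ha]; exact hℓm
            · rw [ha]; exact hpm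
          have h2m : e₀.2 ∈ insert ℓ C := by
            rcases hor with ⟨_, hb⟩ | ⟨_, hb⟩
            · rw [hb]; exact hpm
            · rw [hb]; exact hℓm
          rcases hcr with ⟨_, hc2⟩ | ⟨_, hc2⟩
          · exact hc2 h2m
          · exact hc2 h1m
        · intro hcr
          have h1m : e₀.1 ∉ C := by
            rcases hor with ⟨ha, _⟩ | ⟨ha, _⟩
            · rw [ha]; exact hℓC
            · rw [ha]; exact hpC
          have h2m : e₀.2 ∉ C := by
            rcases hor with ⟨_, hb⟩ | ⟨_, hb⟩
            · rw [hb]; exact hpC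
            · rw [hb]; exact hℓC
          rcases hcr with ⟨hc1, _⟩ | ⟨hc1, _⟩
          · exact h1m hc1
          · exact h2m hc1
      · intro x hx
        split_ifs with hpC
        · rw [Finset.mem_insert]
          constructor
          · intro h
            rcases h with h | h
            · exact absurd h hx
            · exact h
          · exact fun h => Or.inr h
        · exact Iff.rfl
    have hCrE' : ∀ (C : Finset ι), C ⊆ V' → ∀ e ∈ E',
        (Cr C e ↔ Cr (if p ∈ C then insert ℓ C else C) e) := by
      intro C hCV' e he
      obtain ⟨-, -, hmem⟩ := hCt C hCV'
      have h1 : e.1 ≠ ℓ := (Finset.mem_erase.mp (hEV' e he).1).1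
      have h2 : e.2 ≠ ℓ := (Finset.mem_erase.mp (hEV' e he).2.1).1
      unfold Cr
      rw [hmem e.1 h1, hmem e.2 h2]
    have hcross' : ∀ C : Finset ι, C ⊆ V' → ∀ i ∈ C, ∀ j ∈ V', j ∉ C →
        ∃ e ∈ E', Cr C e := by
      intro C hCV' i hi j hj hjC
      obtain ⟨hCtV, hCte₀, hmem⟩ := hCt C hCV'
      have hjℓ : j ≠ ℓ := (Finset.mem_erase.mp hj).1
      have hiC2 : i ∈ (if p ∈ C then insert ℓ C else C) := by
        split_ifs with hpC
        · exact Finset.mem_insert_of_mem hi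
        · exact hi
      have hjC2 : j ∉ (if p ∈ C then insert ℓ C else C) := fun h => hjC ((hmem j hjℓ).mp h)
      obtain ⟨e, he, hcr⟩ := hcross _ hCtV i hiC2 j (Finset.mem_of_mem_erase hj) hjC2
      have hee₀ : e ≠ e₀ := fun h => hCte₀ (h ▸ hcr)
      have heE' : e ∈ E' := Finset.mem_erase.mpr ⟨hee₀, he⟩
      exact ⟨e, heE', (hCrE' C hCV' e heE').mpr hcr⟩
    have hdom' : ∀ C : Finset ι, C ⊆ V' → ∀ i ∈ C, ∀ j ∈ V', j ∉ C →
        ∀ ee ∈ E', Cr C ee → (∀ e ∈ E', Cr C e → e = ee) →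
          T' ee.1 ∪ T' ee.2 ⊆ T' i ∪ T' j := by
      intro C hCV' i hi j hj hjC ee heeE' hcree huniq'
      obtain ⟨hCtV, hCte₀, hmem⟩ := hCt C hCV'
      have hjℓ : j ≠ ℓ := (Finset.mem_erase.mp hj).1
      have hiC2 : i ∈ (if p ∈ C then insert ℓ C else C) := by
        split_ifs with hpC
        · exact Finset.mem_insert_of_mem hi
        · exact hi
      have hjC2 : j ∉ (if p ∈ C then insert ℓ C else C) := fun h => hjC ((hmem j hjℓ).mp h)
      have huniqC2 : ∀ e ∈ E, Cr (if p ∈ C then insert ℓ C else C) e → e = ee := by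
        intro e he hcr
        have hee₀ : e ≠ e₀ := fun h => hCte₀ (h ▸ hcr)
        have heE' : e ∈ E' := Finset.mem_erase.mpr ⟨hee₀, he⟩
        exact huniq' e heE' ((hCrE' C hCV' e heE').mpr hcr)
      have hdj := hdom _ hCtV i hiC2 j (Finset.mem_of_mem_erase hj) hjC2 ee
        (Finset.mem_of_mem_erase heeE') ((hCrE' C hCV' ee heeE').mp hcree) huniqC2
      intro x hx
      have hxD : x ∉ D := by
        rcases Finset.mem_union.mp hx with h | h <;> exact (Finset.mem_sdiff.mp h).2
      have hxT : x ∈ T ee.1 ∪ T ee.2 := by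
        rcases Finset.mem_union.mp hx with h | h
        · exact Finset.mem_union_left _ (Finset.mem_sdiff.mp h).1
        · exact Finset.mem_union_right _ (Finset.mem_sdiff.mp h).1
      rcases Finset.mem_union.mp (hdj hxT) with h | h
      · exact Finset.mem_union_left _ (Finset.mem_sdiff.mpr ⟨h, hxD⟩)
      · exact Finset.mem_union_right _ (Finset.mem_sdiff.mpr ⟨h, hxD⟩)
    have IHc := IH V' hV'ss T' E' hEV' hanti' hne'' hcard' hcross' hdom'
    -- conclude by counting
    have hsub : D ∪ V'.biUnion T' ⊆ V.biUnion T := by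
      intro x hx
      rcases Finset.mem_union.mp hx with h | h
      · exact Finset.mem_biUnion.mpr ⟨p, hpV, (Finset.mem_sdiff.mp h).1⟩
      · obtain ⟨j, hj, hxj⟩ := Finset.mem_biUnion.mp h
        exact Finset.mem_biUnion.mpr ⟨j, Finset.mem_of_mem_erase hj,
          (Finset.mem_sdiff.mp hxj).1⟩
    have hdisj : Disjoint D (V'.biUnion T') := by
      rw [Finset.disjoint_right]
      intro x hx
      obtain ⟨j, _, hxj⟩ := Finset.mem_biUnion.mp hx
      exact (Finset.mem_sdiff.mp hxj).2
    have hcount : D.card + (V'.biUnion T').card ≤ (V.biUnion T).card := by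
      rw [← Finset.card_union_of_disjoint hdisj]
      exact Finset.card_le_card hsub
    have hVcard : V'.card = V.card - 1 := by
      rw [hV'def, Finset.card_erase_of_mem hℓV]
    have hDpos : 1 ≤ D.card := Finset.Nonempty.card_pos hDne
    omega


end S8G

section Glue

set_option maxHeartbeats 2000000 in
theorem statement8' (k : Type) [Field k] (n q : ℕ)
    (S : ℕ → Finset (Fin n))
    (hmin : MinGen n q S)
    (hpd : PdOne k n q S) :
    q + 1 ≤ n := by
  classical
  rcases Nat.eq_zero_or_pos q with hq | hq
  · -- q = 0 : the kernel is trivial, contradicting PdOne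
    subst hq
    exfalso
    apply hpd.2
    apply le_antisymm _ bot_le
    intro v hv
    rw [LinearMap.mem_ker, S8.piMap_apply, Fin.sum_univ_one] at hv
    have h0 : v 0 = 0 := by
      rcases mul_eq_zero.mp hv with h | h
      · exact h
      · exact absurd h (S8.mon_ne_zero _)
    rw [Submodule.mem_bot]
    funext l
    have hl0 : l = 0 := by
      have hlt := l.isLt
      apply Fin.ext
      simp only [Fin.val_zero]
      omega
    rw [hl0, h0]
    rfl
  · -- main case
    obtain ⟨E, f, hEdiag, hEcard, hf, hEf⟩ := S8.main_alg hpd.1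
    set T : Fin (q+1) → Finset (Fin n) := fun i => S i.1 with hT
    have hvalne : ∀ i j : Fin (q+1), i ≠ j → (i : ℕ) ≠ (j : ℕ) := by
      intro i j hij h
      exact hij (Fin.val_injective h)
    have hle : ∀ i : Fin (q+1), (i : ℕ) ≤ q := fun i => Nat.lt_succ_iff.mp i.isLt
    have hanti : ∀ i ∈ (Finset.univ : Finset (Fin (q+1))), ∀ j ∈ Finset.univ, i ≠ j →
        ¬ T i ⊆ T j := by
      intro i _ j _ hij
      exact hmin i.1 (hle i) j.1 (hle j) (hvalne i j hij)
    have hne : ∀ i ∈ (Finset.univ : Finset (Fin (q+1))), (T i).Nonempty := by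
      intro i _
      rcases Finset.eq_empty_or_nonempty (T i) with he | hn
      · exfalso
        have hq2 : 1 < q + 1 := by omega
        obtain ⟨j, _, hji⟩ := Finset.exists_mem_ne
          (s := (Finset.univ : Finset (Fin (q+1)))) (by simpa using hq2) i
        refine hmin i.1 (hle i) j.1 (hle j) (hvalne i j (fun h => hji h.symm)) ?_
        rw [show S i.1 = T i from rfl, he]
        exact Finset.empty_subset _
      · exact hn
    have hEV : ∀ e ∈ E, e.1 ∈ (Finset.univ : Finset (Fin (q+1))) ∧ e.2 ∈ Finset.univ ∧
        e.1 ≠ e.2 := by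
      intro e he
      exact ⟨Finset.mem_univ _, Finset.mem_univ _, hEdiag e he⟩
    have hcard : E.card + 1 ≤ (Finset.univ : Finset (Fin (q+1))).card := by
      rw [Finset.card_univ, Fintype.card_fin]
      omega
    have hcross : ∀ C : Finset (Fin (q+1)), C ⊆ Finset.univ → ∀ i ∈ C, ∀ j ∈ Finset.univ,
        j ∉ C → ∃ e ∈ E, S8G.Cr C e := by
      intro C _ i hi j _ hj
      obtain ⟨e, he, hc⟩ := S8.cross_exists hf hEf C hi hj
      exact ⟨e, he, hc⟩
    have hdom : ∀ C : Finset (Fin (q+1)), C ⊆ Finset.univ → ∀ i ∈ C, ∀ j ∈ Finset.univ,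
        j ∉ C → ∀ e₀ ∈ E, S8G.Cr C e₀ → (∀ e ∈ E, S8G.Cr C e → e = e₀) →
          T e₀.1 ∪ T e₀.2 ⊆ T i ∪ T j := by
      intro C _ i hi j _ hj e₀ he₀ hcr huniq
      exact S8.cross_dom hf hEf C hi hj he₀ hcr huniq
    have hcomb := S8G.comb (Finset.univ : Finset (Fin (q+1))) T E hEV hanti hne hcard
      hcross hdom
    rw [Finset.card_univ, Fintype.card_fin] at hcomb
    calc q + 1 ≤ (Finset.univ.biUnion T).card := hcomb
      _ ≤ Fintype.card (Fin n) := Finset.card_le_univ _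
      _ = n := Fintype.card_fin n

end Glue

/-- if `I ⊆ k[x_1,…,x_n]` has projective dimension one and is minimally
generated by `q+1` square-free monomials `m_0,…,m_q`, then `q + 1 ≤ n`. -/
theorem statement8 (k : Type) [Field k] (n q : ℕ)
    (S : ℕ → Finset (Fin n))
    (hmin : MinGen n q S)
    (hpd : PdOne k n q S) :
    q + 1 ≤ n := statement8' k n q S hmin hpd

end
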